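/- Let (X,d) be a strongly geodesic 1-hyperbolic G-space, let V ≤ G be a nontrivial subgroup, and for g ∈ G set l_V(g) = d(X(V), gX(V)). Then for any g₁, g₂ ∈ G with l_V(g₁) ≥ 100 and l_V(g₂) ≥ 100, there exists at most one element v ∈ V such that l_V(g₁ v g₂) ≤ l_V(g₁) + l_V(g₂) − 200. -/

import Mathlib

noncomputable section

namespace KW

open Metric Set Pointwise

variable {X : Type*} [MetricSpace X]

/-- `s` is (the image of) a unit-speed geodesic segment joining `x` to `y`. -/
def IsGeodesicSegment (s : Set X) (x y : X) : Prop :=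
  ∃ (b : ℝ) (f : ℝ → X), 0 ≤ b ∧ f 0 = x ∧ f b = y ∧
    (∀ u ∈ Set.Icc (0 : ℝ) b, ∀ v ∈ Set.Icc (0 : ℝ) b, dist (f u) (f v) = |u - v|) ∧
    s = f '' Set.Icc 0 b

/-- A geodesic metric space. -/
def GeodesicSpace (X : Type*) [MetricSpace X] : Prop :=
  ∀ x y : X, ∃ s : Set X, IsGeodesicSegment s x y

/-- `X` is `δ`-hyperbolic: geodesic, and every geodesic triangle is `δ`-thin. -/
def DeltaHyperbolic (δ : ℝ) (X : Type*) [MetricSpace X] : Prop :=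
  GeodesicSpace X ∧
    ∀ (x y z : X) (s₁ s₂ s₃ : Set X),
      IsGeodesicSegment s₁ x y → IsGeodesicSegment s₂ y z → IsGeodesicSegment s₃ x z →
      ∀ p ∈ s₁, ∃ q ∈ s₂ ∪ s₃, dist p q ≤ δ

/-- `A` is an `ε`-quasiconvex subset of `X`. -/
def Quasiconvex (ε : ℝ) (A : Set X) : Prop :=
  ∀ x ∈ A, ∀ y ∈ A, ∀ s : Set X, IsGeodesicSegment s x y → ∀ p ∈ s, ∃ a ∈ A, dist p a ≤ ε

/-- The Gromov product `(y,z)_x`. -/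
def gromov (x y z : X) : ℝ := (dist y x + dist z x - dist y z) / 2

def IsGeodesicRay (γ : ℝ → X) : Prop :=
  ∀ s t : ℝ, 0 ≤ s → 0 ≤ t → dist (γ s) (γ t) = |s - t|

def IsBiGeodesic (γ : ℝ → X) : Prop :=
  ∀ s t : ℝ, dist (γ s) (γ t) = |s - t|

/-- `A` and `B` are `K`-Hausdorff close. -/
def HClose (K : ℝ) (A B : Set X) : Prop :=
  (∀ a ∈ A, ∃ b ∈ B, dist a b ≤ K) ∧ ∀ b ∈ B, ∃ a ∈ A, dist a b ≤ K

def HausdorffClose (A B : Set X) : Prop := ∃ K : ℝ, HClose K A B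

/-- Two geodesic rays are asymptotic iff their images are Hausdorff close. -/
def Asymptotic (γ γ' : ℝ → X) : Prop :=
  HausdorffClose (γ '' Set.Ici 0) (γ' '' Set.Ici 0)

def GRay (X : Type*) [MetricSpace X] : Type _ := {γ : ℝ → X // IsGeodesicRay γ}

theorem asymptotic_refl (γ : ℝ → X) : Asymptotic γ γ :=
  ⟨0, fun a ha => ⟨a, ha, by simp⟩, fun b hb => ⟨b, hb, by simp⟩⟩

theorem asymptotic_symm {γ γ' : ℝ → X} (h : Asymptotic γ γ') : Asymptotic γ' γ := by
  obtain ⟨K, h₁, h₂⟩ := h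
  refine ⟨K, fun a ha => ?_, fun b hb => ?_⟩
  · obtain ⟨b, hb, hd⟩ := h₂ a ha
    exact ⟨b, hb, by rwa [dist_comm]⟩
  · obtain ⟨a, ha, hd⟩ := h₁ b hb
    exact ⟨a, ha, by rwa [dist_comm]⟩

theorem asymptotic_trans {γ₁ γ₂ γ₃ : ℝ → X} (h : Asymptotic γ₁ γ₂)
    (h' : Asymptotic γ₂ γ₃) : Asymptotic γ₁ γ₃ := by
  obtain ⟨K, h₁, h₂⟩ := h
  obtain ⟨K', h₁', h₂'⟩ := h'
  refine ⟨K + K', fun a ha => ?_, fun c hc => ?_⟩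
  · obtain ⟨b, hb, hab⟩ := h₁ a ha
    obtain ⟨c, hc, hbc⟩ := h₁' b hb
    exact ⟨c, hc, (dist_triangle a b c).trans (by linarith)⟩
  · obtain ⟨b, hb, hbc⟩ := h₂' c hc
    obtain ⟨a, ha, hab⟩ := h₂ b hb
    exact ⟨a, ha, (dist_triangle a b c).trans (by linarith)⟩

def raySetoid (X : Type*) [MetricSpace X] : Setoid (GRay X) where
  r γ γ' := Asymptotic γ.1 γ'.1
  iseqv := ⟨fun γ => asymptotic_refl γ.1, fun h => asymptotic_symm h,
    fun h h' => asymptotic_trans h h'⟩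

/-- The (geodesic) boundary of `X`: asymptoty classes of geodesic rays. -/
def Boundary (X : Type*) [MetricSpace X] : Type _ := Quotient (raySetoid X)

def Boundary.mk {X : Type*} [MetricSpace X] (γ : GRay X) : Boundary X :=
  Quotient.mk (raySetoid X) γ

/-- A strongly geodesic metric space. -/
def StronglyGeodesic (X : Type*) [MetricSpace X] : Prop :=
  GeodesicSpace X ∧
  (∀ γ : ℝ → X, IsGeodesicRay γ → ∀ y : X,
      ∃ γ' : ℝ → X, IsGeodesicRay γ' ∧ γ' 0 = y ∧ Asymptotic γ γ') ∧
  (∀ γ₁ γ₂ : ℝ → X, IsGeodesicRay γ₁ → IsGeodesicRay γ₂ → γ₁ 0 = γ₂ 0 →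
      ¬ Asymptotic γ₁ γ₂ →
      ∃ γ : ℝ → X, IsBiGeodesic γ ∧
        HausdorffClose (Set.range γ) (γ₁ '' Set.Ici 0 ∪ γ₂ '' Set.Ici 0)) ∧
  (∀ (x : X) (u : ℕ → X),
      (∀ M : ℝ, ∃ N : ℕ, ∀ n, N ≤ n → ∀ m, N ≤ m → M ≤ gromov x (u n) (u m)) →
      ∃ γ : ℝ → X, IsGeodesicRay γ ∧ γ 0 = x ∧
        ∀ M : ℝ, ∃ N : ℕ, ∀ n, N ≤ n → ∀ m, N ≤ m → M ≤ gromov x (γ (n : ℝ)) (u m))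

/-- The sequence `u` converges to the boundary point `p`, with basepoint `x`. -/
def SeqConvTo (x : X) (u : ℕ → X) (p : Boundary X) : Prop :=
  ∃ γ : GRay X, Boundary.mk γ = p ∧
    ∀ M : ℝ, ∃ N : ℕ, ∀ n, N ≤ n → ∀ m, N ≤ m → M ≤ gromov x (u n) (γ.1 (m : ℝ))

/-- `γ` is a geodesic ray in the class of the boundary point `p`. -/
def RayTo (γ : ℝ → X) (p : Boundary X) : Prop :=
  ∃ h : IsGeodesicRay γ, Boundary.mk ⟨γ, h⟩ = p

/-- `γ` is a biinfinite geodesic whose two ends converge to `p` and `q`. -/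
def BiGeodesicJoins (γ : ℝ → X) (p q : Boundary X) : Prop :=
  IsBiGeodesic γ ∧ SeqConvTo (γ 0) (fun n => γ (-(n : ℝ))) p ∧
    SeqConvTo (γ 0) (fun n => γ (n : ℝ)) q

/-- `s` is (the image of) a geodesic joining two points of `X ∪ ∂X`. -/
def JoinSet : X ⊕ Boundary X → X ⊕ Boundary X → Set X → Prop
  | Sum.inl x, Sum.inl y, s => IsGeodesicSegment s x y
  | Sum.inl x, Sum.inr p, s => ∃ γ : ℝ → X, γ 0 = x ∧ RayTo γ p ∧ s = γ '' Set.Ici 0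
  | Sum.inr p, Sum.inl x, s => ∃ γ : ℝ → X, γ 0 = x ∧ RayTo γ p ∧ s = γ '' Set.Ici 0
  | Sum.inr p, Sum.inr q, s => ∃ γ : ℝ → X, BiGeodesicJoins γ p q ∧ s = Set.range γ

/-- The convex hull `Conv(A)` of a subset `A ⊆ X ∪ ∂X`. -/
def geoConv (A : Set (X ⊕ Boundary X)) : Set X :=
  {x | (∃ a : X, A = {Sum.inl a} ∧ x = a) ∨
    ∃ p ∈ A, ∃ q ∈ A, p ≠ q ∧ ∃ s : Set X, JoinSet p q s ∧ x ∈ s}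

/-- The distance between two subsets of `X`. -/
def setDist (A B : Set X) : ℝ := sInf (Set.image2 dist A B)

/-- `a` is a projection of `p` on `A` (relative to `δ`). -/
def IsProjection (δ : ℝ) (A : Set X) (p a : X) : Prop :=
  a ∈ A ∧ ∀ a' ∈ A, dist p a ≤ dist p a' + δ

/-- `f` restricted to `[0,L]` is a unit-speed geodesic from `x` to `y`. -/
def GeodParam (f : ℝ → X) (L : ℝ) (x y : X) : Prop :=
  0 ≤ L ∧ f 0 = x ∧ f L = y ∧
    ∀ u ∈ Set.Icc (0 : ℝ) L, ∀ v ∈ Set.Icc (0 : ℝ) L, dist (f u) (f v) = |u - v|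

/-- Concatenation of three paths, the first on `[0,a]`, the second on `[0,b]`. -/
def concat3 (f₁ f₂ f₃ : ℝ → X) (a b : ℝ) : ℝ → X := fun t =>
  if t ≤ a then f₁ t else if t ≤ a + b then f₂ (t - a) else f₃ (t - a - b)

/-- `f` is a `(lam, ε)`-quasigeodesic on `[a,b]`. -/
def QuasigeodesicOn (lam ε : ℝ) (f : ℝ → X) (a b : ℝ) : Prop :=
  ∀ s ∈ Set.Icc a b, ∀ t ∈ Set.Icc a b, |s - t| ≤ lam * dist (f s) (f t) + ε

/-- The action of `G` on `X` is by isometries. -/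
def IsometricAction (G Y : Type*) [Group G] [MetricSpace Y] [MulAction G Y] : Prop :=
  ∀ (g : G) (x y : Y), dist (g • x) (g • y) = dist x y

section GroupAction

variable {G : Type*} [Group G]

/-- The limit set `Λ(U) ⊆ ∂X` of a subgroup `U ≤ G`. -/
def limitSet (X : Type*) [MetricSpace X] [MulAction G X] (U : Subgroup G) :
    Set (Boundary X) :=
  {p | ∃ x₀ : X, ∃ u : ℕ → U, SeqConvTo x₀ (fun n => ((u n : G)) • x₀) p}

/-- The small displacement set `E(U)` (relative to `δ`). -/
def smallDispSet (X : Type*) [MetricSpace X] [MulAction G X] (δ : ℝ) (U : Subgroup G) :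
    Set X :=
  {x | ∃ u : G, u ∈ U ∧ u ≠ 1 ∧ dist x (u • x) ≤ 100 * δ}

/-- `Z(U) = Conv(Λ(U) ∪ E(U))`. -/
def ZSet (X : Type*) [MetricSpace X] [MulAction G X] (δ : ℝ) (U : Subgroup G) : Set X :=
  geoConv (Sum.inr '' limitSet X U ∪ Sum.inl '' smallDispSet X δ U)

/-- The convex hull `X(U)`: the closure of `Conv(Z(U))`. -/
def cHull (X : Type*) [MetricSpace X] [MulAction G X] (δ : ℝ) (U : Subgroup G) : Set X :=
  closure (geoConv (Sum.inl '' ZSet X δ U))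

/-- The weak convex hull `X_U = Conv(Λ(U))`. -/
def weakHull (X : Type*) [MetricSpace X] [MulAction G X] (U : Subgroup G) : Set X :=
  geoConv (Sum.inr '' limitSet X U)

/-- `l_V(g) = d(X(V), gX(V))`. -/
def lV (X : Type*) [MetricSpace X] [MulAction G X] (δ : ℝ) (V : Subgroup G) (g : G) : ℝ :=
  setDist (cHull X δ V) (g • cHull X δ V)

/-- The translation length of `g`. -/
def translationLength (X : Type*) [MetricSpace X] [MulAction G X] (g : G) : ℝ :=
  sInf (Set.range fun x : X => dist x (g • x))

/-- The asymptotic translation length of `g`. -/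
def asympTranslationLength (X : Type*) [MetricSpace X] [MulAction G X] (g : G) : ℝ :=
  Filter.liminf (fun n : ℕ => translationLength X (g ^ n) / (n : ℝ)) Filter.atTop

/-- An elementary move between `G`-tuples `(U₁,…,U_n; h₁,…,h_m)`. -/
def gMove {n m : ℕ} (M M' : (Fin n → Subgroup G) × (Fin m → G)) : Prop :=
  (M'.2 = M.2 ∧ ∃ (j : Fin n) (g : G),
      g ∈ Subgroup.closure (Set.range M.2 ∪ ⋃ i ∈ {i : Fin n | i ≠ j}, ((M.1 i : Set G))) ∧
      (∀ i, i ≠ j → M'.1 i = M.1 i) ∧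
      M'.1 j = Subgroup.map (MulAut.conj g).toMonoidHom (M.1 j)) ∨
  (M'.1 = M.1 ∧ ∃ (i : Fin m) (g₁ g₂ : G),
      g₁ ∈ Subgroup.closure (M.2 '' {j : Fin m | j ≠ i} ∪ ⋃ t, ((M.1 t : Set G))) ∧
      g₂ ∈ Subgroup.closure (M.2 '' {j : Fin m | j ≠ i} ∪ ⋃ t, ((M.1 t : Set G))) ∧
      (∀ j, j ≠ i → M'.2 j = M.2 j) ∧
      M'.2 i = g₁ * M.2 i * g₂)

/-- Equivalence of `G`-tuples: a finite chain of elementary moves. -/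
def gEquiv {n m : ℕ} :
    (Fin n → Subgroup G) × (Fin m → G) → (Fin n → Subgroup G) × (Fin m → G) → Prop :=
  Relation.ReflTransGen gMove

/-- The family of factors `U₁,…,U_n, F(h₁),…,F(h_m)`. -/
def FF {n : ℕ} (m : ℕ) (U : Fin n → Subgroup G) : Fin n ⊕ Fin m → Type _
  | Sum.inl j => ↥(U j)
  | Sum.inr _ => FreeGroup PUnit

instance ffGroup {n : ℕ} (m : ℕ) (U : Fin n → Subgroup G) :
    (i : Fin n ⊕ Fin m) → Group (FF m U i)
  | Sum.inl j => inferInstanceAs (Group ↥(U j))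
  | Sum.inr _ => inferInstanceAs (Group (FreeGroup PUnit))

def ffHoms {n m : ℕ} (U : Fin n → Subgroup G) (H : Fin m → G) :
    (i : Fin n ⊕ Fin m) → FF m U i →* G
  | Sum.inl j => (U j).subtype
  | Sum.inr j => FreeGroup.lift fun _ => H j

/-- The canonical homomorphism `U₁ ∗ ⋯ ∗ U_n ∗ F(H) → G`. -/
def freeProdHom {n m : ℕ} (U : Fin n → Subgroup G) (H : Fin m → G) :
    Monoid.CoprodI (FF m U) →* G :=
  Monoid.CoprodI.lift (ffHoms U H)

/-- `W = U₁ ∗ ⋯ ∗ U_n ∗ F(H)`: the canonical homomorphism is injective with image `W`. -/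
def IsFreeProdDecomp {n m : ℕ} (U : Fin n → Subgroup G) (H : Fin m → G)
    (W : Subgroup G) : Prop :=
  Function.Injective (freeProdHom U H) ∧ (freeProdHom U H).range = W

/-- Minimality of the `G`-pair `(V; H)` (relative to a `1`-hyperbolic `G`-space `X`). -/
def PairMinimal (X : Type*) [MetricSpace X] [MulAction G X] {m : ℕ}
    (V : Subgroup G) (H : Fin m → G) : Prop :=
  ∀ (V' : Subgroup G) (H' : Fin m → G),
    gEquiv ((fun _ : Fin 1 => V), H) ((fun _ : Fin 1 => V'), H') →
    (∑ i, lV X 1 V (H i)) ≤ (∑ i, lV X 1 V' (H' i)) + 1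

/-- An elementary Nielsen move on tuples of elements of `G`. -/
def NielsenMove {k : ℕ} (g g' : Fin k → G) : Prop :=
  (∃ i : Fin k, (∀ j, j ≠ i → g' j = g j) ∧ g' i = (g i)⁻¹) ∨
  (∃ i j : Fin k, i ≠ j ∧ (∀ t, t ≠ i → g' t = g t) ∧ g' i = g i * g j) ∨
  (∃ i j : Fin k, i ≠ j ∧ g' = g ∘ Equiv.swap i j)

/-- Nielsen equivalence: a finite chain of elementary Nielsen moves. -/
def NielsenEq {k : ℕ} : (Fin k → G) → (Fin k → G) → Prop :=
  Relation.ReflTransGen NielsenMove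

/-- Word length of `g` with respect to the (symmetrized) generating set `S`. -/
def wordLength (S : Set G) (g : G) : ℕ :=
  sInf {n : ℕ | ∃ f : Fin n → G, (∀ i, f i ∈ S ∨ (f i)⁻¹ ∈ S) ∧ (List.ofFn f).prod = g}

/-- `(X, ι)` is a model of the Cayley graph `Γ(G,S)`. -/
def IsCayleyGraph (G : Type*) [Group G] (S : Set G) (X : Type*) [MetricSpace X]
    [MulAction G X] (ι : G → X) : Prop :=
  IsometricAction G X ∧
  (∀ g h : G, ι (g * h) = g • ι h) ∧
  Function.Injective ι ∧
  GeodesicSpace X ∧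
  (∀ g h : G, dist (ι g) (ι h) = (wordLength S (g⁻¹ * h) : ℝ)) ∧
  ∀ x : X, ∃ g h : G, wordLength S (g⁻¹ * h) ≤ 1 ∧
    ∃ s : Set X, IsGeodesicSegment s (ι g) (ι h) ∧ x ∈ s

/-- `H` is a quasiconvex subgroup (with respect to the Cayley graph model `(X, ι)`). -/
def QCSubgroup (X : Type*) [MetricSpace X] (ι : G → X) (H : Subgroup G) : Prop :=
  ∃ ε : ℝ, 0 ≤ ε ∧ Quasiconvex ε (ι '' (H : Set G))

end GroupAction

/-- Every nontrivial element of finite order has finite centralizer. -/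
def AlmostTorsionFree (G : Type*) [Group G] : Prop :=
  ∀ g : G, g ≠ 1 → IsOfFinOrder g → ((Subgroup.centralizer {g} : Subgroup G) : Set G).Finite

/-- `U` is nontrivial and admits no nontrivial free product decomposition. -/
def FreelyIndecomposable (U : Type*) [Group U] : Prop :=
  Nontrivial U ∧
    ¬ ∃ A B : Subgroup U, A ≠ ⊥ ∧ B ≠ ⊥ ∧
        Function.Bijective (Monoid.Coprod.lift A.subtype B.subtype)

def InfiniteCyclic (U : Type*) [Group U] : Prop := Infinite U ∧ IsCyclic U

def VirtuallyCyclic (U : Type*) [Group U] : Prop :=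
  ∃ H : Subgroup U, H.index ≠ 0 ∧ IsCyclic ↥H

def NonElementary (U : Type*) [Group U] : Prop := ¬ Finite U ∧ ¬ VirtuallyCyclic U

end KW

universe u v

namespace KW

open Pointwise Metric Set


section AuxGeod

variable {X : Type*} [MetricSpace X]

lemma geodParam_of_seg {s : Set X} {x y : X} (h : IsGeodesicSegment s x y) :
    ∃ f : ℝ → X, GeodParam f (dist x y) x y ∧ s = f '' Set.Icc 0 (dist x y) := by
  obtain ⟨b, f, hb, h0, hb', hisom, hs⟩ := h
  have hd : dist x y = b := by
    have := hisom 0 ⟨le_refl 0, hb⟩ b ⟨hb, le_refl b⟩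
    rw [h0, hb'] at this
    rw [this, abs_of_nonpos (by linarith)]; ring
  refine ⟨f, ?_, by rw [hd]; exact hs⟩
  rw [hd]; exact ⟨hb, h0, hb', hisom⟩

lemma exists_geodParam (hgeo : GeodesicSpace X) (x y : X) :
    ∃ f : ℝ → X, GeodParam f (dist x y) x y := by
  obtain ⟨s, hs⟩ := hgeo x y
  obtain ⟨f, hf, -⟩ := geodParam_of_seg hs
  exact ⟨f, hf⟩

lemma GeodParam.seg {f : ℝ → X} {L : ℝ} {x y : X} (h : GeodParam f L x y) :
    IsGeodesicSegment (f '' Set.Icc 0 L) x y :=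
  ⟨L, f, h.1, h.2.1, h.2.2.1, h.2.2.2, rfl⟩

lemma GeodParam.dist_left {f : ℝ → X} {L : ℝ} {x y : X} (h : GeodParam f L x y)
    {t : ℝ} (ht : t ∈ Set.Icc 0 L) : dist (f t) x = t := by
  have := h.2.2.2 t ht 0 ⟨le_refl 0, h.1⟩
  rw [h.2.1] at this
  rw [this, abs_of_nonneg (by simpa using ht.1)]; ring_nf

lemma GeodParam.dist_right {f : ℝ → X} {L : ℝ} {x y : X} (h : GeodParam f L x y)
    {t : ℝ} (ht : t ∈ Set.Icc 0 L) : dist (f t) y = L - t := by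
  have := h.2.2.2 t ht L ⟨h.1, le_refl L⟩
  rw [h.2.2.1] at this
  rw [this, abs_of_nonpos (by linarith [ht.2])]; ring

lemma GeodParam.mem_left {f : ℝ → X} {L : ℝ} {x y : X} (h : GeodParam f L x y) :
    x ∈ f '' Set.Icc 0 L := ⟨0, ⟨le_refl 0, h.1⟩, h.2.1⟩

lemma GeodParam.mem_right {f : ℝ → X} {L : ℝ} {x y : X} (h : GeodParam f L x y) :
    y ∈ f '' Set.Icc 0 L := ⟨L, ⟨h.1, le_refl L⟩, h.2.2.1⟩

lemma seg_symm {s : Set X} {x y : X} (h : IsGeodesicSegment s x y) :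
    IsGeodesicSegment s y x := by
  obtain ⟨f, hf, rfl⟩ := geodParam_of_seg h
  set L := dist x y with hL
  refine ⟨L, fun t => f (L - t), hf.1, by simp [hf.2.2.1], by simp [hf.2.1], ?_, ?_⟩
  · intro u hu v hv
    rw [hf.2.2.2 (L - u) ⟨by linarith [hu.2], by linarith [hu.1]⟩
        (L - v) ⟨by linarith [hv.2], by linarith [hv.1]⟩]
    rw [show L - u - (L - v) = -(u - v) by ring, abs_neg]
  · ext z
    constructor
    · rintro ⟨t, ht, rfl⟩
      exact ⟨L - t, ⟨by linarith [ht.2], by linarith [ht.1]⟩, by ring_nf⟩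
    · rintro ⟨t, ht, rfl⟩
      exact ⟨L - t, ⟨by linarith [ht.2], by linarith [ht.1]⟩, by ring_nf⟩

/-- Point on a geodesic segment: split into a subsegment that is itself a geodesic
segment ending at the right endpoint, contained in the original. -/
lemma seg_sub_right {s : Set X} {x y : X} (h : IsGeodesicSegment s x y) {p : X}
    (hp : p ∈ s) : ∃ s' : Set X, IsGeodesicSegment s' p y ∧ s' ⊆ s := by
  obtain ⟨f, hf, rfl⟩ := geodParam_of_seg h
  set L := dist x y with hL
  obtain ⟨t, ht, rfl⟩ := hp
  refine ⟨(fun u => f (t + u)) '' Set.Icc 0 (L - t), ⟨L - t, fun u => f (t + u),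
    by linarith [ht.2], by simp, by simp [hf.2.2.1], ?_, rfl⟩, ?_⟩
  · intro u hu v hv
    rw [hf.2.2.2 (t + u) ⟨by linarith [hu.1, ht.1], by linarith [hu.2]⟩
        (t + v) ⟨by linarith [hv.1, ht.1], by linarith [hv.2]⟩]
    congr 1; ring
  · rintro z ⟨u, hu, rfl⟩
    exact ⟨t + u, ⟨by linarith [hu.1, ht.1], by linarith [hu.2]⟩, rfl⟩

end AuxGeod


section AuxAction

variable {G : Type*} {X : Type*} [Group G] [MetricSpace X] [MulAction G X]

lemma smul_ray (hiso : IsometricAction G X) (g : G) {γ : ℝ → X} (h : IsGeodesicRay γ) :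
    IsGeodesicRay (fun t => g • γ t) := fun s t hs ht => by
  rw [hiso]; exact h s t hs ht

def rayMap (hiso : IsometricAction G X) (g : G) (γ : GRay X) : GRay X :=
  ⟨fun t => g • γ.1 t, smul_ray hiso g γ.2⟩

lemma hclose_smul (hiso : IsometricAction G X) (g : G) {K : ℝ} {A B : Set X}
    (h : HClose K A B) : HClose K ((g • ·) '' A) ((g • ·) '' B) := by
  obtain ⟨h1, h2⟩ := h
  constructor
  · rintro _ ⟨a, ha, rfl⟩
    obtain ⟨b, hb, hd⟩ := h1 a ha
    exact ⟨g • b, ⟨b, hb, rfl⟩, by rw [hiso]; exact hd⟩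
  · rintro _ ⟨b, hb, rfl⟩
    obtain ⟨a, ha, hd⟩ := h2 b hb
    exact ⟨g • a, ⟨a, ha, rfl⟩, by rw [hiso]; exact hd⟩

lemma asymptotic_smul (hiso : IsometricAction G X) (g : G) {γ γ' : ℝ → X}
    (h : Asymptotic γ γ') : Asymptotic (fun t => g • γ t) (fun t => g • γ' t) := by
  obtain ⟨K, hK⟩ := h
  refine ⟨K, ?_⟩
  have e1 : (fun t => g • γ t) '' Set.Ici 0 = (g • ·) '' (γ '' Set.Ici 0) := by
    rw [Set.image_image]
  have e2 : (fun t => g • γ' t) '' Set.Ici 0 = (g • ·) '' (γ' '' Set.Ici 0) := by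
    rw [Set.image_image]
  rw [e1, e2]
  exact hclose_smul hiso g hK

def bmap (hiso : IsometricAction G X) (g : G) : Boundary X → Boundary X :=
  Quotient.lift (fun γ => Boundary.mk (rayMap hiso g γ))
    (fun γ γ' hr => Quotient.sound (asymptotic_smul hiso g hr))

lemma bmap_mk (hiso : IsometricAction G X) (g : G) (γ : GRay X) :
    bmap hiso g (Boundary.mk γ) = Boundary.mk (rayMap hiso g γ) := rfl

lemma bmap_inv (hiso : IsometricAction G X) (g : G) (p : Boundary X) :
    bmap hiso g⁻¹ (bmap hiso g p) = p := by
  induction p using Quotient.ind with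
  | _ γ =>
    show Boundary.mk (rayMap hiso g⁻¹ (rayMap hiso g γ)) = Boundary.mk γ
    exact congrArg Boundary.mk (Subtype.ext (funext fun t => inv_smul_smul g (γ.1 t)))

lemma gromov_smul (hiso : IsometricAction G X) (g : G) (x y z : X) :
    gromov (g • x) (g • y) (g • z) = gromov x y z := by
  unfold gromov; rw [hiso, hiso, hiso]

lemma seqconv_smul (hiso : IsometricAction G X) (g : G) {x : X} {u : ℕ → X}
    {p : Boundary X} (h : SeqConvTo x u p) :
    SeqConvTo (g • x) (fun n => g • u n) (bmap hiso g p) := by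
  obtain ⟨γ, hγ, hcond⟩ := h
  refine ⟨rayMap hiso g γ, by rw [← hγ]; rfl, fun M => ?_⟩
  obtain ⟨N, hN⟩ := hcond M
  refine ⟨N, fun n hn m hm => ?_⟩
  have : gromov (g • x) (g • u n) ((rayMap hiso g γ).1 (m : ℝ)) =
      gromov x (u n) (γ.1 (m : ℝ)) := gromov_smul hiso g x (u n) (γ.1 (m : ℝ))
  rw [this]
  exact hN n hn m hm

lemma rayTo_smul (hiso : IsometricAction G X) (g : G) {γ : ℝ → X} {p : Boundary X}
    (h : RayTo γ p) : RayTo (fun t => g • γ t) (bmap hiso g p) := by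
  obtain ⟨hray, hmk⟩ := h
  exact ⟨smul_ray hiso g hray, by rw [← hmk]; rfl⟩

lemma seg_smul (hiso : IsometricAction G X) (g : G) {s : Set X} {x y : X}
    (h : IsGeodesicSegment s x y) : IsGeodesicSegment ((g • ·) '' s) (g • x) (g • y) := by
  obtain ⟨b, f, hb, h0, hb', hisom, hs⟩ := h
  refine ⟨b, fun t => g • f t, hb, by show g • f 0 = g • x; rw [h0],
    by show g • f b = g • y; rw [hb'], fun u hu v hv => ?_, ?_⟩
  · rw [hiso]; exact hisom u hu v hv
  · rw [hs, Set.image_image]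

lemma joinSet_smul (hiso : IsometricAction G X) (g : G) {p q : X ⊕ Boundary X} {s : Set X}
    (h : JoinSet p q s) :
    JoinSet (Sum.map (g • ·) (bmap hiso g) p) (Sum.map (g • ·) (bmap hiso g) q)
      ((g • ·) '' s) := by
  match p, q with
  | Sum.inl x, Sum.inl y => exact seg_smul hiso g h
  | Sum.inl x, Sum.inr P =>
    obtain ⟨γ, h0, hray, rfl⟩ := h
    exact ⟨fun t => g • γ t, by show g • γ 0 = g • x; rw [h0], rayTo_smul hiso g hray,
      by rw [Set.image_image]⟩
  | Sum.inr P, Sum.inl x =>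
    obtain ⟨γ, h0, hray, rfl⟩ := h
    exact ⟨fun t => g • γ t, by show g • γ 0 = g • x; rw [h0], rayTo_smul hiso g hray,
      by rw [Set.image_image]⟩
  | Sum.inr P, Sum.inr Q =>
    obtain ⟨γ, ⟨hbi, hsp, hsq⟩, rfl⟩ := h
    refine ⟨fun t => g • γ t, ⟨fun u t' => by rw [hiso]; exact hbi u t', ?_, ?_⟩, ?_⟩
    · exact seqconv_smul hiso g hsp
    · exact seqconv_smul hiso g hsq
    · rw [← Set.range_comp]; rfl

lemma smap_inv (hiso : IsometricAction G X) (g : G) (p : X ⊕ Boundary X) :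
    Sum.map (g⁻¹ • ·) (bmap hiso g⁻¹) (Sum.map (g • ·) (bmap hiso g) p) = p := by
  cases p with
  | inl x => simp [inv_smul_smul]
  | inr P => simp [bmap_inv]

lemma geoConv_smul_mem (hiso : IsometricAction G X) (g : G) {A : Set (X ⊕ Boundary X)}
    {x : X} (hx : x ∈ geoConv A) :
    g • x ∈ geoConv (Sum.map (g • ·) (bmap hiso g) '' A) := by
  rcases hx with ⟨a, hA, rfl⟩ | ⟨p, hp, q, hq, hne, s, hjoin, hxs⟩
  · exact Or.inl ⟨g • x, by rw [hA]; simp, rfl⟩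
  · refine Or.inr ⟨_, Set.mem_image_of_mem _ hp, _, Set.mem_image_of_mem _ hq, ?_,
      (g • ·) '' s, joinSet_smul hiso g hjoin, Set.mem_image_of_mem _ hxs⟩
    intro h
    apply hne
    have := congrArg (Sum.map (g⁻¹ • ·) (bmap hiso g⁻¹)) h
    rwa [smap_inv hiso, smap_inv hiso] at this

lemma geoConv_smul (hiso : IsometricAction G X) (g : G) (A : Set (X ⊕ Boundary X)) :
    (g • ·) '' geoConv A = geoConv (Sum.map (g • ·) (bmap hiso g) '' A) := by
  apply Set.Subset.antisymm
  · rintro _ ⟨x, hx, rfl⟩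
    exact geoConv_smul_mem hiso g hx
  · intro y hy
    have h2 := geoConv_smul_mem hiso g⁻¹ hy
    rw [Set.image_image] at h2
    have h3 : (fun a => Sum.map (g⁻¹ • ·) (bmap hiso g⁻¹) (Sum.map (g • ·) (bmap hiso g) a))
        '' A = A := by
      have : ∀ a ∈ A, Sum.map (g⁻¹ • ·) (bmap hiso g⁻¹) (Sum.map (g • ·) (bmap hiso g) a)
          = a := fun a _ => smap_inv hiso g a
      rw [Set.image_congr this]; exact Set.image_id' A
    rw [h3] at h2
    exact ⟨g⁻¹ • y, h2, smul_inv_smul g y⟩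

end AuxAction


section AuxHull

variable {G : Type*} {X : Type*} [Group G] [MetricSpace X] [MulAction G X]

lemma limitSet_bmap (hiso : IsometricAction G X) {V : Subgroup G} {v : G} (hv : v ∈ V)
    {p : Boundary X} (hp : p ∈ limitSet X V) : bmap hiso v p ∈ limitSet X V := by
  obtain ⟨x₀, u, hconv⟩ := hp
  refine ⟨v • x₀, fun n => ⟨v * (u n : G) * v⁻¹,
    mul_mem (mul_mem hv (u n).2) (inv_mem hv)⟩, ?_⟩
  have h2 := seqconv_smul hiso v hconv
  have e : (fun n => (v * (u n : G) * v⁻¹) • (v • x₀)) =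
      fun n => v • ((u n : G) • x₀) := by
    funext n
    rw [smul_smul, inv_mul_cancel_right, mul_smul]
  show SeqConvTo (v • x₀) (fun n => (v * (u n : G) * v⁻¹) • (v • x₀)) (bmap hiso v p)
  rw [e]
  exact h2

lemma limitSet_smul_image (hiso : IsometricAction G X) {V : Subgroup G} {v : G}
    (hv : v ∈ V) : bmap hiso v '' limitSet X V = limitSet X V := by
  apply Set.Subset.antisymm
  · rintro _ ⟨p, hp, rfl⟩
    exact limitSet_bmap hiso hv hp
  · intro p hp
    refine ⟨bmap hiso v⁻¹ p, limitSet_bmap hiso (inv_mem hv) hp, ?_⟩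
    have := bmap_inv hiso v⁻¹ p
    rwa [inv_inv] at this

lemma smallDisp_smul_mem (hiso : IsometricAction G X) {V : Subgroup G} {v : G}
    (hv : v ∈ V) {δ : ℝ} {x : X} (hx : x ∈ smallDispSet X δ V) :
    v • x ∈ smallDispSet X δ V := by
  obtain ⟨u, huV, hu1, hd⟩ := hx
  refine ⟨v * u * v⁻¹, mul_mem (mul_mem hv huV) (inv_mem hv), ?_, ?_⟩
  · intro h
    apply hu1
    have h2 : v * u * v⁻¹ * v = 1 * v := by rw [h]
    rw [inv_mul_cancel_right, one_mul] at h2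
    exact mul_left_cancel (h2.trans (mul_one v).symm)
  · have e : (v * u * v⁻¹) • (v • x) = v • (u • x) := by
      rw [smul_smul, inv_mul_cancel_right, mul_smul]
    rw [e, hiso]
    exact hd

lemma smallDisp_smul_image (hiso : IsometricAction G X) {V : Subgroup G} {v : G}
    (hv : v ∈ V) (δ : ℝ) : (v • ·) '' smallDispSet X δ V = smallDispSet X δ V := by
  apply Set.Subset.antisymm
  · rintro _ ⟨x, hx, rfl⟩
    exact smallDisp_smul_mem hiso hv hx
  · intro x hx
    exact ⟨v⁻¹ • x, smallDisp_smul_mem hiso (inv_mem hv) hx, smul_inv_smul v x⟩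

lemma zset_smul (hiso : IsometricAction G X) {V : Subgroup G} {v : G} (hv : v ∈ V) :
    (v • ·) '' ZSet X 1 V = ZSet X 1 V := by
  have e1 : Sum.map (fun x : X => v • x) (bmap hiso v) '' (Sum.inr '' limitSet X V) =
      Sum.inr '' limitSet X V := by
    rw [Set.image_image]
    show (fun x => Sum.inr (bmap hiso v x)) '' limitSet X V = Sum.inr '' limitSet X V
    rw [← Set.image_image Sum.inr (bmap hiso v), limitSet_smul_image hiso hv]
  have e2 : Sum.map (fun x : X => v • x) (bmap hiso v) '' (Sum.inl '' smallDispSet X (1:ℝ) V) =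
      Sum.inl '' smallDispSet X (1:ℝ) V := by
    rw [Set.image_image]
    show (fun x => Sum.inl (v • x)) '' smallDispSet X (1:ℝ) V
      = Sum.inl '' smallDispSet X (1:ℝ) V
    rw [← Set.image_image Sum.inl (fun x => v • x), smallDisp_smul_image hiso hv]
  unfold ZSet
  rw [geoConv_smul hiso v, Set.image_union, e1, e2]

lemma convZ_smul (hiso : IsometricAction G X) {V : Subgroup G} {v : G} (hv : v ∈ V) :
    (v • ·) '' geoConv (Sum.inl '' ZSet X 1 V) = geoConv (Sum.inl '' ZSet X 1 V) := by
  have e2 : Sum.map (fun x : X => v • x) (bmap hiso v) '' (Sum.inl '' ZSet X 1 V) =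
      Sum.inl '' ZSet X 1 V := by
    rw [Set.image_image]
    show (fun x => Sum.inl (v • x)) '' ZSet X 1 V = Sum.inl '' ZSet X 1 V
    rw [← Set.image_image Sum.inl (fun x => v • x), zset_smul hiso hv]
  rw [geoConv_smul hiso v, e2]

lemma seg_mem_left {X : Type*} [MetricSpace X] {s : Set X} {x y : X}
    (h : IsGeodesicSegment s x y) : x ∈ s := by
  obtain ⟨f, hf, rfl⟩ := geodParam_of_seg h
  exact hf.mem_left

lemma subset_geoConv {X : Type*} [MetricSpace X] (hgeo : GeodesicSpace X) (Z : Set X) :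
    Z ⊆ geoConv (Sum.inl '' Z) := by
  intro a ha
  by_cases hZ : ∀ z ∈ Z, z = a
  · refine Or.inl ⟨a, ?_, rfl⟩
    apply Set.eq_singleton_iff_unique_mem.2
    refine ⟨⟨a, ha, rfl⟩, ?_⟩
    rintro _ ⟨z, hz, rfl⟩
    rw [hZ z hz]
  · push_neg at hZ
    obtain ⟨z, hz, hne⟩ := hZ
    obtain ⟨s, hs⟩ := hgeo a z
    exact Or.inr ⟨Sum.inl a, ⟨a, ha, rfl⟩, Sum.inl z, ⟨z, hz, rfl⟩,
      fun h => hne (Sum.inl.inj h).symm, s, hs, seg_mem_left hs⟩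

lemma geoConv_pair_sub {X : Type*} [MetricSpace X] (hgeo : GeodesicSpace X) {Z : Set X}
    {z₁ z₂ : X} (h₁ : z₁ ∈ Z) (h₂ : z₂ ∈ Z) {s : Set X}
    (hs : IsGeodesicSegment s z₁ z₂) : s ⊆ geoConv (Sum.inl '' Z) := by
  intro p hp
  by_cases hz : z₁ = z₂
  · subst hz
    obtain ⟨f, hf, rfl⟩ := geodParam_of_seg hs
    obtain ⟨t, ht, rfl⟩ := hp
    have : t = 0 := le_antisymm (by simpa [dist_self] using ht.2) ht.1
    rw [this, hf.2.1]
    exact subset_geoConv hgeo Z h₁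
  · exact Or.inr ⟨Sum.inl z₁, ⟨z₁, h₁, rfl⟩, Sum.inl z₂, ⟨z₂, h₂, rfl⟩,
      fun h => hz (Sum.inl.inj h), s, hs, hp⟩

lemma mem_geoConv_struct {X : Type*} [MetricSpace X] (hgeo : GeodesicSpace X) {Z : Set X}
    {x : X} (hx : x ∈ geoConv (Sum.inl '' Z)) :
    ∃ z ∈ Z, ∃ s : Set X, IsGeodesicSegment s x z ∧ s ⊆ geoConv (Sum.inl '' Z) := by
  rcases hx with ⟨a, hA, rfl⟩ | ⟨p, hp, q, hq, hne, s, hjoin, hxs⟩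
  · have haZ : x ∈ Z := by
      have h2 : (Sum.inl x : X ⊕ Boundary X) ∈ Sum.inl '' Z := by
        rw [hA]; exact Set.mem_singleton _
      obtain ⟨a', ha', he⟩ := h2
      rwa [← Sum.inl.inj he]
    refine ⟨x, haZ, {x}, ⟨0, fun _ => x, le_refl 0, rfl, rfl, ?_, by
      rw [Set.Icc_self, Set.image_singleton]⟩, ?_⟩
    · intro u hu v hv
      rw [Set.Icc_self, Set.mem_singleton_iff] at hu hv
      rw [hu, hv]
      simp
    · intro p hp
      rw [Set.mem_singleton_iff] at hp
      rw [hp]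
      exact Or.inl ⟨x, hA, rfl⟩
  · obtain ⟨z₁, hz₁, rfl⟩ := hp
    obtain ⟨z₂, hz₂, rfl⟩ := hq
    obtain ⟨s', hs', hsub⟩ := seg_sub_right hjoin hxs
    exact ⟨z₂, hz₂, s', hs',
      hsub.trans (geoConv_pair_sub hgeo hz₁ hz₂ hjoin)⟩

lemma quasiconvex_convZ {X : Type*} [MetricSpace X] (hhyp : DeltaHyperbolic 1 X)
    (Z : Set X) : Quasiconvex 2 (geoConv (Sum.inl '' Z)) := by
  intro x hx y hy s hs p hp
  obtain ⟨zy, hzy, σy, hσy, hσyC⟩ := mem_geoConv_struct hhyp.1 hy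
  obtain ⟨zx, hzx, σx, hσx, hσxC⟩ := mem_geoConv_struct hhyp.1 hx
  obtain ⟨T, hT⟩ := hhyp.1 x zy
  obtain ⟨q, hq, hpq⟩ := hhyp.2 x y zy s σy T hs hσy hT p hp
  rcases hq with hq | hq
  · exact ⟨q, hσyC hq, by linarith⟩
  · obtain ⟨U, hU⟩ := hhyp.1 zy zx
    obtain ⟨r, hr, hqr⟩ := hhyp.2 x zy zx T U σx hT hU hσx q hq
    have hd : dist p r ≤ 2 := by
      calc dist p r ≤ dist p q + dist q r := dist_triangle p q r
        _ ≤ 2 := by linarith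
    rcases hr with hr | hr
    · exact ⟨r, geoConv_pair_sub hhyp.1 hzy hzx hU hr, hd⟩
    · exact ⟨r, hσxC hr, hd⟩

lemma quasiconvex_smul (hiso : IsometricAction G X) {κ : ℝ} {A : Set X}
    (h : Quasiconvex κ A) (g : G) : Quasiconvex κ ((g • ·) '' A) := by
  rintro _ ⟨x, hx, rfl⟩ _ ⟨y, hy, rfl⟩ s hs p hp
  have hs' := seg_smul hiso g⁻¹ hs
  rw [inv_smul_smul, inv_smul_smul] at hs'
  obtain ⟨a, ha, hd⟩ := h x hx y hy _ hs' (g⁻¹ • p) ⟨p, hp, rfl⟩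
  refine ⟨g • a, ⟨a, ha, rfl⟩, ?_⟩
  have h3 := hiso g (g⁻¹ • p) a
  rw [smul_inv_smul] at h3
  rw [h3]
  exact hd

lemma setDist_le {X : Type*} [MetricSpace X] {A B : Set X} {a b : X} (ha : a ∈ A)
    (hb : b ∈ B) : setDist A B ≤ dist a b := by
  apply csInf_le
  · refine ⟨0, ?_⟩
    rintro r ⟨x, _, y, _, rfl⟩
    exact dist_nonneg
  · exact Set.mem_image2_of_mem ha hb

lemma setDist_exists {X : Type*} [MetricSpace X] {A B : Set X} (hA : A.Nonempty)
    (hB : B.Nonempty) {ε : ℝ} (hε : 0 < ε) :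
    ∃ a ∈ A, ∃ b ∈ B, dist a b < setDist A B + ε := by
  have hne : (Set.image2 dist A B).Nonempty := Set.Nonempty.image2 hA hB
  obtain ⟨r, hr, hlt⟩ := exists_lt_of_csInf_lt hne
    (show sInf (Set.image2 dist A B) < setDist A B + ε by
      unfold setDist; linarith)
  obtain ⟨a, ha, b, hb, rfl⟩ := hr
  exact ⟨a, ha, b, hb, hlt⟩

end AuxHull


section AuxFinal

variable {G : Type*} {X : Type*} [Group G] [MetricSpace X] [MulAction G X]

lemma geodParam_smul (hiso : IsometricAction G X) (g : G) {f : ℝ → X} {L : ℝ} {x y : X}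
    (h : GeodParam f L x y) : GeodParam (fun t => g • f t) L (g • x) (g • y) :=
  ⟨h.1, by show g • f 0 = g • x; rw [h.2.1],
    by show g • f L = g • y; rw [h.2.2.1],
    fun u hu v' hv' => by rw [hiso]; exact h.2.2.2 u hu v' hv'⟩

lemma smallDisp_subset_zset (hsg : StronglyGeodesic X) (V : Subgroup G) :
    smallDispSet X 1 V ⊆ ZSet X 1 V := by
  intro e he
  have heW : (Sum.inl e : X ⊕ Boundary X) ∈
      Sum.inr '' limitSet X V ∪ Sum.inl '' smallDispSet X (1:ℝ) V := Or.inr ⟨e, he, rfl⟩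
  by_cases hW : ∀ w ∈ Sum.inr '' limitSet X V ∪ Sum.inl '' smallDispSet X (1:ℝ) V,
      w = Sum.inl e
  · exact Or.inl ⟨e, Set.eq_singleton_iff_unique_mem.2 ⟨heW, hW⟩, rfl⟩
  · push_neg at hW
    obtain ⟨w, hw, hne⟩ := hW
    match w, hw, hne with
    | Sum.inl e', hw, hne =>
      have hee : e' ≠ e := fun h => hne (by rw [h])
      obtain ⟨s, hs⟩ := hsg.1 e e'
      exact Or.inr ⟨Sum.inl e, heW, Sum.inl e', hw,
        fun h => hee (Sum.inl.inj h).symm, s, hs, seg_mem_left hs⟩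
    | Sum.inr P, hw, hne =>
      obtain ⟨γ₀, hγ₀⟩ := Quot.exists_rep P
      obtain ⟨γ', hγ', h0, hasym⟩ := hsg.2.1 γ₀.1 γ₀.2 e
      refine Or.inr ⟨Sum.inl e, heW, Sum.inr P, hw, fun h => Sum.inl_ne_inr h,
        γ' '' Set.Ici 0, ⟨γ', h0, ⟨hγ', ?_⟩, rfl⟩, ⟨0, Set.self_mem_Ici, h0⟩⟩
      rw [← hγ₀]
      exact Quotient.sound (asymptotic_symm hasym)

end AuxFinal

theorem statement16 {G : Type u} {X : Type v} [Group G] [MetricSpace X] [MulAction G X]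
    (hiso : IsometricAction G X) (hsg : StronglyGeodesic X) (hhyp : DeltaHyperbolic 1 X)
    (V : Subgroup G) (hV : V ≠ ⊥) (g₁ g₂ : G)
    (h₁ : 100 ≤ lV X 1 V g₁) (h₂ : 100 ≤ lV X 1 V g₂) :
    ∀ v w : G, v ∈ V → w ∈ V →
      lV X 1 V (g₁ * v * g₂) ≤ lV X 1 V g₁ + lV X 1 V g₂ - 200 →
      lV X 1 V (g₁ * w * g₂) ≤ lV X 1 V g₁ + lV X 1 V g₂ - 200 →
      v = w := by
  intro v w hvV hwV hv hw
  have hgeo : GeodesicSpace X := hhyp.1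
  -- notation
  set C : Set X := geoConv (Sum.inl '' ZSet X 1 V) with hCdef
  have hYdef : cHull X 1 V = closure C := rfl
  have hCY : C ⊆ cHull X 1 V := by rw [hYdef]; exact subset_closure
  -- C is nonempty
  have hCne : C.Nonempty := by
    by_contra hne
    rw [Set.not_nonempty_iff_eq_empty] at hne
    have hYe : cHull X 1 V = ∅ := by rw [hYdef, hne, closure_empty]
    have h0 : lV X 1 V g₁ = 0 := by
      show setDist (cHull X 1 V) (g₁ • cHull X 1 V) = 0
      rw [hYe]
      show sInf (Set.image2 dist ∅ (g₁ • (∅ : Set X))) = 0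
      rw [Set.image2_empty_left, Real.sInf_empty]
    rw [h0] at h₁
    linarith
  have hYne : (cHull X 1 V).Nonempty := ⟨hCne.choose, hCY hCne.choose_spec⟩
  set l₁ := lV X 1 V g₁ with hl₁
  set l₂ := lV X 1 V g₂ with hl₂
  -- quasiconvexity of C
  have hqc : Quasiconvex 2 C := quasiconvex_convZ hhyp (ZSet X 1 V)
  -- V-invariance of C
  have hCinv : ∀ u : G, u ∈ V → ∀ x ∈ C, u • x ∈ C := by
    intro u hu x hx
    have he := convZ_smul hiso hu (X := X)
    rw [hCdef, ← he]
    exact ⟨x, hx, rfl⟩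
  -- lower bound for distances
  have hlow : ∀ (g : G) (p q : X), p ∈ cHull X 1 V → q ∈ cHull X 1 V →
      lV X 1 V g ≤ dist p (g • q) := by
    intro g p q hp hq
    exact setDist_le hp (Set.smul_mem_smul_set hq)
  -- nearly optimal pairs in C
  have happrox : ∀ g : G, ∃ p q : X, p ∈ C ∧ q ∈ C ∧
      dist p (g • q) ≤ lV X 1 V g + 1 := by
    intro g
    have hgYne : (g • cHull X 1 V).Nonempty := hYne.smul_set
    obtain ⟨p₀, hp₀, b', hb', hd⟩ :=
      setDist_exists hYne hgYne (show (0:ℝ) < 1/2 by norm_num)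
    obtain ⟨q₀, hq₀, rfl⟩ := hb'
    obtain ⟨p, hpC, hpd⟩ := Metric.mem_closure_iff.1
      (show p₀ ∈ closure C from hp₀) (1/4) (by norm_num)
    obtain ⟨q, hqC, hqd⟩ := Metric.mem_closure_iff.1
      (show q₀ ∈ closure C from hq₀) (1/4) (by norm_num)
    refine ⟨p, q, hpC, hqC, ?_⟩
    have e1 : dist (g • q₀) (g • q) = dist q₀ q := hiso g q₀ q
    calc dist p (g • q) ≤ dist p p₀ + dist p₀ (g • q₀) + dist (g • q₀) (g • q) :=
          dist_triangle4 p p₀ (g • q₀) (g • q)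
      _ ≤ 1/4 + (lV X 1 V g + 1/2) + 1/4 := by
          rw [e1, dist_comm p p₀]
          have : setDist (cHull X 1 V) (g • cHull X 1 V) = lV X 1 V g := rfl
          rw [this] at hd
          linarith [le_of_lt hpd, le_of_lt hqd, le_of_lt hd]
      _ = lV X 1 V g + 1 := by ring
  -- the two fixed bridges
  obtain ⟨y₁, yh, hy₁C, hyhC, hbr1⟩ := happrox g₁
  obtain ⟨b₀, bh0, hb₀C, hbh0C, hbr2⟩ := happrox g₂
  set z₁ : X := g₁ • yh with hz₁def
  obtain ⟨α, hα⟩ := exists_geodParam hgeo y₁ z₁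
  set L₁ : ℝ := dist y₁ z₁ with hL₁def
  obtain ⟨β, hβ⟩ := exists_geodParam hgeo b₀ (g₂ • bh0)
  set L₂ : ℝ := dist b₀ (g₂ • bh0) with hL₂def
  have hL₁l : l₁ ≤ L₁ := hlow g₁ y₁ yh (hCY hy₁C) (hCY hyhC)
  have hL₁u : L₁ ≤ l₁ + 1 := hbr1
  have hL₂l : l₂ ≤ L₂ := hlow g₂ b₀ bh0 (hCY hb₀C) (hCY hbh0C)
  have hL₂u : L₂ ≤ l₂ + 1 := hbr2
  set m : X := α (L₁ - 50) with hmdef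
  have hmIcc : L₁ - 50 ∈ Set.Icc (0:ℝ) L₁ := ⟨by linarith, by linarith⟩
  have hmy₁ : dist m y₁ = L₁ - 50 := hα.dist_left hmIcc
  have hmz₁ : dist m z₁ = 50 := by
    have := hα.dist_right hmIcc
    rw [this]; ring
  -- m is far from g₁ • (hull)
  have hm_g₁ : ∀ x ∈ cHull X 1 V, (49:ℝ) ≤ dist m (g₁ • x) := by
    intro x hx
    have h1 : l₁ ≤ dist y₁ (g₁ • x) := hlow g₁ y₁ x (hCY hy₁C) hx
    have h2 := dist_triangle y₁ m (g₁ • x)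
    rw [dist_comm y₁ m] at h2
    linarith
  -- m is far from the hull itself
  have hm_Y : ∀ x ∈ cHull X 1 V, (50:ℝ) ≤ dist m x := by
    intro x hx
    have h1 : l₁ ≤ dist x (g₁ • yh) := hlow g₁ x yh hx (hCY hyhC)
    have h2 := dist_triangle x m z₁
    rw [dist_comm x m, hmz₁, hz₁def] at h2
    linarith
  -- key geometric claim
  have key : ∀ u : G, u ∈ V →
      lV X 1 V (g₁ * u * g₂) ≤ l₁ + l₂ - 200 →
      dist ((g₁ * u) • β 50) m ≤ 5 := by
    intro u huV hu
    -- far from g • hull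
    have hm_g : ∀ x ∈ cHull X 1 V, l₂ - 50 ≤ dist m ((g₁ * u * g₂) • x) := by
      intro x hx
      have e1 : dist z₁ ((g₁ * u * g₂) • x) = dist (u⁻¹ • yh) (g₂ • x) := by
        rw [hz₁def]
        have e2 : (g₁ * u * g₂) • x = g₁ • (u • (g₂ • x)) := by
          rw [mul_smul, mul_smul]
        rw [e2, hiso g₁]
        have e3 := hiso u (u⁻¹ • yh) (g₂ • x)
        rw [smul_inv_smul] at e3
        rw [← e3]
      have h1 : l₂ ≤ dist (u⁻¹ • yh) (g₂ • x) :=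
        hlow g₂ (u⁻¹ • yh) x (hCY (hCinv u⁻¹ (inv_mem huV) yh hyhC)) hx
      have h2 := dist_triangle z₁ m ((g₁ * u * g₂) • x)
      rw [dist_comm z₁ m, hmz₁] at h2
      rw [e1] at h2
      linarith
    -- nearly optimal pair for g := g₁ u g₂
    obtain ⟨a, bh, haC, hbhC, hab⟩ := happrox (g₁ * u * g₂)
    have hab' : dist a ((g₁ * u * g₂) • bh) ≤ l₁ + l₂ - 199 := by linarith
    -- transported second bridge
    have hβ' : GeodParam (fun t => (g₁ * u) • β t) L₂ ((g₁ * u) • b₀)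
        ((g₁ * u) • (g₂ • bh0)) := geodParam_smul hiso (g₁ * u) hβ
    -- memberships of transported endpoints
    have hcC : (g₁ * u) • b₀ ∈ (fun x => g₁ • x) '' C :=
      ⟨u • b₀, hCinv u huV b₀ hb₀C, by rw [mul_smul]⟩
    have hc'C : (g₁ * u) • (g₂ • bh0) ∈ (fun x => (g₁ * u * g₂) • x) '' C :=
      ⟨bh0, hbh0C, by show (g₁ * u * g₂) • bh0 = (g₁ * u) • (g₂ • bh0); rw [mul_smul]⟩
    -- the six segments
    have hSα := hα.seg
    obtain ⟨Sσ, hSσ⟩ := hgeo z₁ ((g₁ * u) • b₀)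
    have hSβ := hβ'.seg
    obtain ⟨Sτ, hSτ⟩ := hgeo ((g₁ * u) • (g₂ • bh0)) ((g₁ * u * g₂) • bh)
    obtain ⟨Sρ, hSρ⟩ := hgeo ((g₁ * u * g₂) • bh) a
    obtain ⟨Sπ, hSπ⟩ := hgeo y₁ a
    obtain ⟨D₁, hD₁⟩ := hgeo y₁ ((g₁ * u) • b₀)
    obtain ⟨D₂, hD₂⟩ := hgeo y₁ ((g₁ * u) • (g₂ • bh0))
    obtain ⟨D₃, hD₃⟩ := hgeo y₁ ((g₁ * u * g₂) • bh)
    have hmmem : m ∈ α '' Set.Icc 0 L₁ := ⟨L₁ - 50, hmIcc, rfl⟩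
    -- exclusion helpers
    have hqcg₁ := quasiconvex_smul hiso hqc g₁
    have hqcg := quasiconvex_smul hiso hqc (g₁ * u * g₂)
    have hz₁mem : z₁ ∈ (fun x => g₁ • x) '' C := ⟨yh, hyhC, rfl⟩
    have hbmem : (g₁ * u * g₂) • bh ∈ (fun x => (g₁ * u * g₂) • x) '' C := ⟨bh, hbhC, rfl⟩
    -- step 1
    obtain ⟨q₁, hq₁, hd₁⟩ := hhyp.2 y₁ z₁ ((g₁ * u) • b₀) _ Sσ D₁ hSα hSσ hD₁ m hmmem
    rcases hq₁ with hq₁ | hq₁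
    · -- q₁ on Sσ : impossible
      exfalso
      obtain ⟨e, heC, hde⟩ := hqcg₁ z₁ hz₁mem ((g₁ * u) • b₀) hcC Sσ hSσ q₁ hq₁
      obtain ⟨x', hx'C, rfl⟩ := heC
      have h49 := hm_g₁ x' (hCY hx'C)
      have := dist_triangle m q₁ (g₁ • x')
      linarith
    -- step 2
    obtain ⟨q₂, hq₂, hd₂⟩ := hhyp.2 y₁ ((g₁ * u) • b₀) ((g₁ * u) • (g₂ • bh0)) D₁ _ D₂
      hD₁ hSβ hD₂ q₁ hq₁
    have hmq₂ : dist m q₂ ≤ 2 := by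
      have := dist_triangle m q₁ q₂
      linarith
    rcases hq₂ with hq₂ | hq₂
    · -- q₂ on the transported bridge : conclude
      obtain ⟨s, hsIcc, rfl⟩ := hq₂
      have hds_c : dist ((fun t => (g₁ * u) • β t) s) ((g₁ * u) • b₀) = s :=
        hβ'.dist_left hsIcc
      have hds_c' : dist ((fun t => (g₁ * u) • β t) s) ((g₁ * u) • (g₂ • bh0)) = L₂ - s :=
        hβ'.dist_right hsIcc
      have hmc : (49:ℝ) ≤ dist m ((g₁ * u) • b₀) := by
        have := hm_g₁ (u • b₀) (hCY (hCinv u huV b₀ hb₀C))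
        rwa [← mul_smul] at this
      have hmc' : l₂ - 50 ≤ dist m ((g₁ * u) • (g₂ • bh0)) := by
        have := hm_g bh0 (hCY hbh0C)
        rwa [mul_smul (g₁ * u) g₂ bh0] at this
      have hs_lb : (47:ℝ) ≤ s := by
        have := dist_triangle m ((fun t => (g₁ * u) • β t) s) ((g₁ * u) • b₀)
        rw [hds_c] at this
        linarith
      have hs_ub : s ≤ 53 := by
        have := dist_triangle m ((fun t => (g₁ * u) • β t) s) ((g₁ * u) • (g₂ • bh0))
        rw [hds_c'] at this
        linarith
      have h50Icc : (50:ℝ) ∈ Set.Icc (0:ℝ) L₂ := ⟨by norm_num, by linarith⟩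
      have hdd : dist ((g₁ * u) • β 50) ((fun t => (g₁ * u) • β t) s) = |50 - s| :=
        hβ'.2.2.2 50 h50Icc s hsIcc
      have habs : |50 - s| ≤ 3 := abs_le.2 ⟨by linarith, by linarith⟩
      have := dist_triangle ((g₁ * u) • β 50) ((fun t => (g₁ * u) • β t) s) m
      rw [hdd, dist_comm ((fun t => (g₁ * u) • β t) s) m] at this
      linarith
    -- step 3
    exfalso
    obtain ⟨q₃, hq₃, hd₃⟩ := hhyp.2 y₁ ((g₁ * u) • (g₂ • bh0)) ((g₁ * u * g₂) • bh) D₂ Sτ D₃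
      hD₂ hSτ hD₃ q₂ hq₂
    have hmq₃ : dist m q₃ ≤ 3 := by
      have := dist_triangle m q₂ q₃
      linarith
    rcases hq₃ with hq₃ | hq₃
    · -- q₃ on Sτ : impossible
      obtain ⟨e, heC, hde⟩ := hqcg ((g₁ * u) • (g₂ • bh0)) hc'C ((g₁ * u * g₂) • bh) hbmem
        Sτ hSτ q₃ hq₃
      obtain ⟨x', hx'C, rfl⟩ := heC
      have h50 := hm_g x' (hCY hx'C)
      have := dist_triangle m q₃ ((g₁ * u * g₂) • x')
      linarith
    -- step 4
    obtain ⟨q₄, hq₄, hd₄⟩ := hhyp.2 y₁ ((g₁ * u * g₂) • bh) a D₃ Sρ Sπ hD₃ hSρ hSπ q₃ hq₃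
    have hmq₄ : dist m q₄ ≤ 4 := by
      have := dist_triangle m q₃ q₄
      linarith
    rcases hq₄ with hq₄ | hq₄
    · -- q₄ on Sρ : impossible
      obtain ⟨f, hf, hSρeq⟩ := geodParam_of_seg hSρ
      rw [hSρeq] at hq₄
      obtain ⟨t, htIcc, rfl⟩ := hq₄
      have hd_b : dist (f t) ((g₁ * u * g₂) • bh) = t := hf.dist_left htIcc
      have hd_a : dist (f t) a = dist ((g₁ * u * g₂) • bh) a - t := hf.dist_right htIcc
      -- distances from a and b to z₁
      have haz : l₁ ≤ dist a z₁ := by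
        have := hlow g₁ a yh (hCY haC) (hCY hyhC)
        rwa [hz₁def]
      have hbz : l₂ ≤ dist ((g₁ * u * g₂) • bh) z₁ := by
        have e1 : dist z₁ ((g₁ * u * g₂) • bh) = dist (u⁻¹ • yh) (g₂ • bh) := by
          rw [hz₁def]
          have e2 : (g₁ * u * g₂) • bh = g₁ • (u • (g₂ • bh)) := by
            rw [mul_smul, mul_smul]
          rw [e2, hiso g₁]
          have e3 := hiso u (u⁻¹ • yh) (g₂ • bh)
          rw [smul_inv_smul] at e3
          rw [← e3]
        rw [dist_comm, e1]
        exact hlow g₂ (u⁻¹ • yh) bh (hCY (hCinv u⁻¹ (inv_mem huV) yh hyhC)) (hCY hbhC)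
      have hLρ : dist ((g₁ * u * g₂) • bh) a ≤ l₁ + l₂ - 199 := by
        rw [dist_comm]; exact hab'
      have h1 : l₁ - (dist ((g₁ * u * g₂) • bh) a - t) ≤ dist (f t) z₁ := by
        have := dist_triangle a (f t) z₁
        rw [dist_comm a (f t), hd_a] at this
        linarith
      have h2 : l₂ - t ≤ dist (f t) z₁ := by
        have := dist_triangle ((g₁ * u * g₂) • bh) (f t) z₁
        rw [dist_comm _ (f t), hd_b] at this
        linarith
      have h3 : (99.5:ℝ) ≤ dist (f t) z₁ := by linarith
      have := dist_triangle (f t) m z₁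
      rw [hmz₁, dist_comm (f t) m] at this
      linarith
    · -- q₄ on Sπ : impossible
      obtain ⟨e, heC, hde⟩ := hqc y₁ hy₁C a haC Sπ hSπ q₄ hq₄
      have h50 := hm_Y e (hCY heC)
      have := dist_triangle m q₄ e
      linarith
  -- apply key to v and w
  have kv := key v hvV hv
  have kw := key w hwV hw
  have hvw10 : dist (v • β 50) (w • β 50) ≤ 10 := by
    have h1 := dist_triangle ((g₁ * v) • β 50) m ((g₁ * w) • β 50)
    rw [dist_comm m ((g₁ * w) • β 50)] at h1
    have h2 : dist ((g₁ * v) • β 50) ((g₁ * w) • β 50) =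
        dist (v • β 50) (w • β 50) := by
      rw [mul_smul, mul_smul]
      exact hiso g₁ (v • β 50) (w • β 50)
    linarith
  -- conclude
  by_contra hvw
  have hu1 : v⁻¹ * w ≠ 1 := fun h => hvw (inv_mul_eq_one.1 h)
  have hdisp : dist (β 50) ((v⁻¹ * w) • β 50) ≤ 100 * 1 := by
    have e1 : v • ((v⁻¹ * w) • β 50) = w • β 50 := by
      rw [smul_smul, mul_inv_cancel_left]
    have e2 := hiso v (β 50) ((v⁻¹ * w) • β 50)
    rw [e1] at e2
    rw [← e2]
    linarith
  have hE : β 50 ∈ smallDispSet X 1 V :=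
    ⟨v⁻¹ * w, mul_mem (inv_mem hvV) hwV, hu1, hdisp⟩
  have hβC : β 50 ∈ C := subset_geoConv hgeo (ZSet X 1 V)
    (smallDisp_subset_zset hsg V hE)
  have h50Icc : (50:ℝ) ∈ Set.Icc (0:ℝ) L₂ := ⟨by norm_num, by linarith⟩
  have hfar : l₂ ≤ dist (β 50) (g₂ • bh0) := hlow g₂ (β 50) bh0 (hCY hβC) (hCY hbh0C)
  have hnear : dist (β 50) (g₂ • bh0) = L₂ - 50 := hβ.dist_right h50Icc
  rw [hnear] at hfar
  linarith

end KW
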